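/- If h is analytic on the unit disk, h(0) = 0, h'(0) = 1, and h maps the disk univalently onto a convex domain, then Re(h(z)/z) > 1/2 for all z in the unit disk (Marx–Strohhäcker theorem). -/

import Mathlib

open Metric Set Complex Filter Topology

noncomputable def Complex.abs : AbsoluteValue ℂ ℝ where
  toFun z := ‖z‖
  map_mul' := norm_mul
  nonneg' := norm_nonneg
  eq_zero' _ := norm_eq_zero
  add_le' := norm_add_le

lemma Complex.norm_eq_abs (z : ℂ) : ‖z‖ = Complex.abs z := rfl

@[simp]
lemma Complex.abs_ofReal (r : ℝ) : Complex.abs (r : ℂ) = |r| := Complex.norm_real r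

lemma Complex.sq_abs (z : ℂ) : Complex.abs z ^ 2 = Complex.normSq z := Complex.sq_norm z

lemma Complex.re_le_abs (z : ℂ) : z.re ≤ Complex.abs z := Complex.re_le_norm z

@[simp]
lemma Complex.abs_exp (z : ℂ) : Complex.abs (Complex.exp z) = Real.exp z.re := Complex.norm_exp z

lemma Complex.continuous_abs : Continuous Complex.abs := continuous_norm

lemma Complex.abs_le_abs_of_mapsTo_ball_self {f : ℂ → ℂ} {R : ℝ} {z : ℂ}
    (hd : DifferentiableOn ℂ f (ball 0 R)) (h_maps : MapsTo f (ball 0 R) (ball 0 R))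
    (h₀ : f 0 = 0) (hz : Complex.abs z < R) : Complex.abs (f z) ≤ Complex.abs z :=
  Complex.norm_le_norm_of_mapsTo_ball hd (h_maps.mono_right ball_subset_closedBall) h₀ hz

lemma ms_left_deriv_nonneg {f : ℝ → ℝ} {A : ℝ} (hf : HasDerivAt f A 1)
    (hmax : ∀ t, 0 ≤ t → t < 1 → f t ≤ f 1) : 0 ≤ A := by
  by_contra hA
  push_neg at hA
  have hs := hasDerivAt_iff_tendsto_slope.1 hf
  have hev : ∀ᶠ t in 𝓝[≠] (1:ℝ), slope f 1 t < 0 := by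
    have : Iio (0:ℝ) ∈ 𝓝 A := Iio_mem_nhds hA
    exact hs.eventually_mem this
  rw [eventually_nhdsWithin_iff] at hev
  rcases Metric.eventually_nhds_iff.1 hev with ⟨δ, hδ, hδev⟩
  set t : ℝ := max (1 - δ/2) (1/2) with ht
  have ht1 : t < 1 := by
    apply max_lt
    · linarith
    · norm_num
  have ht0 : 0 ≤ t := le_trans (by norm_num) (le_max_right _ _)
  have htd : dist t 1 < δ := by
    rw [Real.dist_eq, abs_of_nonpos (by linarith)]
    have : 1 - δ/2 ≤ t := le_max_left _ _
    linarith
  have hslope : slope f 1 t < 0 := hδev htd (by simp [ne_of_lt ht1])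
  rw [slope_def_field] at hslope
  -- (f t - f 1)/(t - 1) < 0 with t - 1 < 0 gives f t > f 1
  have hlt : 0 < f t - f 1 := by
    have h2 : t - 1 < 0 := by linarith
    by_contra hle
    push_neg at hle
    have : 0 ≤ (f t - f 1) / (t - 1) := by
      apply div_nonneg_of_nonpos (by linarith) (le_of_lt h2)
    linarith
  have := hmax t ht0 ht1
  linarith

lemma ms_second_test {u v : ℝ → ℝ} {A : ℝ} (hu : ∀ θ, HasDerivAt u (v θ) θ)
    (hv : HasDerivAt v A 0) (hv0 : v 0 = 0) (hmax : ∀ θ, u θ ≤ u 0) : A ≤ 0 := by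
  by_contra hA
  push_neg at hA
  have hs := hasDerivAt_iff_tendsto_slope.1 hv
  have hev : ∀ᶠ t in 𝓝[≠] (0:ℝ), 0 < slope v 0 t := by
    have : Ioi (0:ℝ) ∈ 𝓝 A := Ioi_mem_nhds hA
    exact hs.eventually_mem this
  rw [eventually_nhdsWithin_iff] at hev
  rcases Metric.eventually_nhds_iff.1 hev with ⟨δ, hδ, hδev⟩
  -- v is positive on (0, δ)
  have hvpos : ∀ x : ℝ, 0 < x → x < δ → 0 < v x := by
    intro x hx0 hxδ
    have hd : dist x 0 < δ := by rw [Real.dist_eq, sub_zero, abs_of_pos hx0]; exact hxδ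
    have := hδev hd (by simp [ne_of_gt hx0])
    rw [slope_def_field, hv0] at this
    have h2 : 0 < (v x - 0) / (x - 0) := this
    rw [sub_zero, sub_zero] at h2
    exact (div_pos_iff.1 h2).resolve_right (fun ⟨_, hx⟩ => absurd hx0 (not_lt.2 (le_of_lt hx))) |>.1
  -- u strictly increasing on [0, δ/2]
  have hmono : StrictMonoOn u (Icc 0 (δ/2)) := by
    apply strictMonoOn_of_deriv_pos (convex_Icc _ _)
    · exact fun x _ => (hu x).continuousAt.continuousWithinAt
    · intro x hx
      rw [interior_Icc, mem_Ioo] at hx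
      rw [(hu x).deriv]
      exact hvpos x hx.1 (by linarith [hx.2])
  have h1 : u 0 < u (δ/2) := hmono (by constructor <;> linarith) (by constructor <;> linarith) (by linarith)
  exact absurd (hmax (δ/2)) (not_le.2 h1)

lemma ms_re_half {Qz σ : ℂ} {c : ℝ} (habs : Complex.abs σ = 1) (hne : σ ≠ 1)
    (heq : Qz * (1 - σ) = 1 + (c:ℂ) * σ) : Qz.re = (1 - c)/2 := by
  set x : ℝ := σ.re with hx
  set y : ℝ := σ.im with hy
  have hx2 : x^2 + y^2 = 1 := by
    have h1 : Complex.normSq σ = 1 := by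
      rw [← Complex.sq_abs, habs]; norm_num
    rw [Complex.normSq_apply] at h1
    rw [hx, hy]; nlinarith [h1]
  have hxlt : x < 1 := by
    have hxle : x ≤ 1 := by
      have := Complex.re_le_abs σ
      rw [habs] at this
      exact this
    rcases lt_or_eq_of_le hxle with h | h
    · exact h
    · exfalso
      apply hne
      have hy0 : y = 0 := by nlinarith [hx2]
      rw [Complex.ext_iff]
      constructor
      · rw [← hx, h]; rfl
      · rw [← hy, hy0]; rfl
  have e1 := congrArg Complex.re heq
  have e2 := congrArg Complex.im heq
  simp only [Complex.mul_re, Complex.mul_im, Complex.sub_re, Complex.sub_im,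
    Complex.one_re, Complex.one_im, Complex.add_re, Complex.add_im,
    Complex.ofReal_re, Complex.ofReal_im, zero_mul, mul_zero, zero_sub, sub_zero,
    zero_add, add_zero] at e1 e2
  have key : Qz.re * (2*(1-x)) = (1-c)*(1-x) := by
    linear_combination (1-x)*e1 - y*e2 - (Qz.re + c)*hx2
  have h3 : (Qz.re * 2 - (1-c)) * (1-x) = 0 := by linear_combination key
  rcases mul_eq_zero.1 h3 with h4 | h4
  · linarith
  · exfalso; linarith

lemma ms_isOpen_image (h : ℂ → ℂ) (hh : DifferentiableOn ℂ h (ball 0 1))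
    (h'0 : deriv h 0 = 1) {s : Set ℂ} (hs : s ⊆ ball 0 1) (hso : IsOpen s) :
    IsOpen (h '' s) := by
  have hA : AnalyticOnNhd ℂ h (ball 0 1) := hh.analyticOnNhd isOpen_ball
  rcases hA.is_constant_or_isOpen (convex_ball _ _).isPreconnected with ⟨w, hw⟩ | H
  · exfalso
    have hev : h =ᶠ[nhds (0:ℂ)] fun _ => w :=
      eventually_of_mem (isOpen_ball.mem_nhds (by simp)) hw
    have := hev.deriv_eq
    rw [h'0, deriv_const] at this
    exact one_ne_zero this
  · exact H s hs hso

lemma ms_inverse (h : ℂ → ℂ) (hh : DifferentiableOn ℂ h (ball 0 1))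
    (hinj : InjOn h (ball 0 1)) (h'0 : deriv h 0 = 1) :
    ∃ k : ℂ → ℂ, (∀ z ∈ ball (0:ℂ) 1, k (h z) = z) ∧
      (∀ w ∈ h '' ball (0:ℂ) 1, h (k w) = w) ∧
      MapsTo k (h '' ball 0 1) (ball 0 1) ∧
      DifferentiableOn ℂ k (h '' ball 0 1) ∧ (∀ z ∈ ball (0:ℂ) 1, deriv h z ≠ 0) := by
  have hBo : IsOpen (ball (0:ℂ) 1) := isOpen_ball
  have hA : AnalyticOnNhd ℂ h (ball 0 1) := hh.analyticOnNhd hBo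
  have hopen : ∀ s ⊆ ball (0:ℂ) 1, IsOpen s → IsOpen (h '' s) :=
    fun s hs hso => ms_isOpen_image h hh h'0 hs hso
  set k := Function.invFunOn h (ball 0 1) with hkdef
  have hk1 : ∀ z ∈ ball (0:ℂ) 1, k (h z) = z := fun z hz => hinj.leftInvOn_invFunOn hz
  have hk2 : ∀ w ∈ h '' ball (0:ℂ) 1, h (k w) = w := by
    rintro w ⟨z, hz, rfl⟩; exact Function.invFunOn_eq ⟨z, hz, rfl⟩
  have hk3 : MapsTo k (h '' ball 0 1) (ball 0 1) := by
    rintro w ⟨z, hz, rfl⟩; exact Function.invFunOn_mem ⟨z, hz, rfl⟩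
  have hkc : ∀ z₀ ∈ ball (0:ℂ) 1, ContinuousAt k (h z₀) := by
    intro z₀ hz₀
    rw [ContinuousAt, hk1 z₀ hz₀, Filter.tendsto_def]
    intro U hU
    rcases Metric.mem_nhds_iff.1 hU with ⟨ε, hε, hUb⟩
    obtain ⟨ε', hε', hεle, hsub⟩ : ∃ ε' > 0, ε' ≤ ε ∧ ball z₀ ε' ⊆ ball (0:ℂ) 1 := by
      rcases Metric.mem_nhds_iff.1 (hBo.mem_nhds hz₀) with ⟨δ, hδ, hδb⟩
      exact ⟨min ε δ, by positivity, min_le_left _ _,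
        (ball_subset_ball (min_le_right _ _)).trans hδb⟩
    have hV : IsOpen (h '' ball z₀ ε') := hopen _ hsub isOpen_ball
    have hVmem : h '' ball z₀ ε' ∈ 𝓝 (h z₀) := hV.mem_nhds ⟨z₀, mem_ball_self hε', rfl⟩
    refine Filter.mem_of_superset hVmem ?_
    rintro w ⟨ζ, hζ, rfl⟩
    show k (h ζ) ∈ U
    rw [hk1 ζ (hsub hζ)]
    exact hUb (ball_subset_ball hεle hζ)
  have hiso : ∀ z₀ ∈ ball (0:ℂ) 1, ∀ᶠ z in 𝓝[≠] z₀, deriv h z ≠ 0 := by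
    intro z₀ hz₀
    rcases (hA.deriv z₀ hz₀).eventually_eq_zero_or_eventually_ne_zero with H | H
    · exfalso
      have hEq : EqOn (deriv h) 0 (ball (0:ℂ) 1) :=
        hA.deriv.eqOn_zero_of_preconnected_of_eventuallyEq_zero
          (convex_ball _ _).isPreconnected hz₀ H
      have := hEq (by simp : (0:ℂ) ∈ ball (0:ℂ) 1)
      rw [h'0] at this
      exact one_ne_zero this
    · exact H
  have kdiff1 : ∀ z₀ ∈ ball (0:ℂ) 1, deriv h z₀ ≠ 0 → DifferentiableAt ℂ k (h z₀) := by
    intro z₀ hz₀ hne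
    obtain ⟨p, hp⟩ := hA z₀ hz₀
    have hs : HasStrictDerivAt h (deriv h z₀) z₀ := by
      have h1 := hp.hasStrictDerivAt
      rw [h1.hasDerivAt.deriv]
      exact h1
    set g := hs.localInverse h (deriv h z₀) z₀ hne with hg
    have hgd : HasStrictDerivAt g (deriv h z₀)⁻¹ (h z₀) := hs.to_localInverse hne
    have hright : ∀ᶠ w in 𝓝 (h z₀), h (g w) = w :=
      (hs.hasStrictFDerivAt_equiv hne).eventually_right_inverse
    have hgval : g (h z₀) = z₀ := (hs.hasStrictFDerivAt_equiv hne).localInverse_apply_image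
    have hmem : ∀ᶠ w in 𝓝 (h z₀), g w ∈ ball (0:ℂ) 1 := by
      have hc : ContinuousAt g (h z₀) :=
        (hs.hasStrictFDerivAt_equiv hne).localInverse_continuousAt
      have hgm : g (h z₀) ∈ ball (0:ℂ) 1 := by rw [hgval]; exact hz₀
      exact hc.eventually_mem (hBo.mem_nhds hgm)
    have heq : k =ᶠ[𝓝 (h z₀)] g := by
      filter_upwards [hright, hmem] with w hw hwB
      calc k w = k (h (g w)) := by rw [hw]
        _ = g w := hk1 _ hwB
    exact heq.symm.differentiableAt_iff.1 hgd.hasDerivAt.differentiableAt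
  have kdiff : ∀ z₀ ∈ ball (0:ℂ) 1, DifferentiableAt ℂ k (h z₀) := by
    intro z₀ hz₀
    by_cases hne : deriv h z₀ = 0
    · have hcont : ContinuousAt k (h z₀) := hkc z₀ hz₀
      have hkz : k (h z₀) = z₀ := hk1 z₀ hz₀
      have hpunct : ∀ᶠ w in 𝓝[≠] (h z₀), DifferentiableAt ℂ k w := by
        have hev : ∀ᶠ z in 𝓝 z₀, z ∈ ball (0:ℂ) 1 ∧ (z ≠ z₀ → deriv h z ≠ 0) :=
          (hBo.eventually_mem hz₀).and (eventually_nhdsWithin_iff.1 (hiso z₀ hz₀))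
        have htd : Tendsto k (𝓝 (h z₀)) (𝓝 z₀) := by
          rw [ContinuousAt, hkz] at hcont; exact hcont
        have hev2 : ∀ᶠ w in 𝓝 (h z₀), k w ∈ ball (0:ℂ) 1 ∧ (k w ≠ z₀ → deriv h (k w) ≠ 0) :=
          htd.eventually hev
        have hev3 : ∀ᶠ w in 𝓝 (h z₀), w ∈ h '' ball (0:ℂ) 1 :=
          (hopen _ Subset.rfl hBo).eventually_mem ⟨z₀, hz₀, rfl⟩
        rw [eventually_nhdsWithin_iff]
        filter_upwards [hev2, hev3] with w hw hwB hwne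
        have h1 : h (k w) = w := hk2 w hwB
        have h2 : k w ≠ z₀ := by
          intro hcontra
          apply hwne
          show w = h z₀
          rw [← h1, hcontra]
        have := kdiff1 (k w) hw.1 (hw.2 h2)
        rwa [h1] at this
      exact (Complex.analyticAt_of_differentiable_on_punctured_nhds_of_continuousAt
        hpunct hcont).differentiableAt
    · exact kdiff1 z₀ hz₀ hne
  have hdne : ∀ z ∈ ball (0:ℂ) 1, deriv h z ≠ 0 := by
    intro z₀ hz₀
    have hcomp : (k ∘ h) =ᶠ[𝓝 z₀] id := by
      filter_upwards [hBo.eventually_mem hz₀] with z hz using hk1 z hz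
    have h1 : deriv (k ∘ h) z₀ = 1 := by rw [hcomp.deriv_eq]; exact deriv_id z₀
    have h2 : deriv (k ∘ h) z₀ = deriv k (h z₀) * deriv h z₀ :=
      deriv_comp z₀ (kdiff z₀ hz₀) (hh.differentiableAt (hBo.mem_nhds hz₀))
    intro hzero
    rw [h1, hzero, mul_zero] at h2
    exact one_ne_zero h2
  refine ⟨k, hk1, hk2, hk3, ?_, hdne⟩
  rintro w ⟨z, hz, rfl⟩
  exact (kdiff z hz).differentiableWithinAt

lemma ms_subball_convex (h k : ℂ → ℂ) (hh : DifferentiableOn ℂ h (ball 0 1))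
    (h0 : h 0 = 0)
    (hconv : Convex ℝ (h '' ball 0 1))
    (hk1 : ∀ z ∈ ball (0:ℂ) 1, k (h z) = z)
    (hk2 : ∀ w ∈ h '' ball (0:ℂ) 1, h (k w) = w)
    (hk3 : MapsTo k (h '' ball 0 1) (ball 0 1))
    (hkd : DifferentiableOn ℂ k (h '' ball 0 1))
    {r : ℝ} (hr0 : 0 < r) (hr1 : r ≤ 1) :
    Convex ℝ (h '' ball 0 r) := by
  rintro x ⟨z₁, hz₁, rfl⟩ y ⟨z₂, hz₂, rfl⟩ a b ha hb hab
  rw [mem_ball_zero_iff] at hz₁ hz₂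
  set m : ℝ := max ‖z₁‖ ‖z₂‖ with hm
  have hm0 : 0 ≤ m := le_max_of_le_left (norm_nonneg _)
  rcases eq_or_lt_of_le hm0 with hm0' | hm0'
  · -- both are zero
    have h1 : z₁ = 0 := by
      have hle : ‖z₁‖ ≤ 0 := by rw [hm0']; exact le_max_left _ _
      simpa using le_antisymm hle (norm_nonneg _)
    have h2 : z₂ = 0 := by
      have hle : ‖z₂‖ ≤ 0 := by rw [hm0']; exact le_max_right _ _
      simpa using le_antisymm hle (norm_nonneg _)
    refine ⟨0, by simpa using hr0, ?_⟩
    rw [h1, h2, h0]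
    simp
  · have hmr : m < r := max_lt hz₁ hz₂
    have hm1 : m < 1 := lt_of_lt_of_le hmr hr1
    have hmne : (m:ℂ) ≠ 0 := by
      simpa using ne_of_gt hm0'
    have hnm : ‖(m:ℂ)‖ = m := by rw [Complex.norm_real, Real.norm_eq_abs, _root_.abs_of_nonneg hm0]
    set A : ℂ := z₁ / (m:ℂ) with hA
    set C : ℂ := z₂ / (m:ℂ) with hC
    have hAn : ‖A‖ ≤ 1 := by
      rw [hA, norm_div, hnm, div_le_one hm0']
      exact le_max_left _ _
    have hCn : ‖C‖ ≤ 1 := by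
      rw [hC, norm_div, hnm, div_le_one hm0']
      exact le_max_right _ _
    -- the inner function
    set F : ℂ → ℂ := fun ζ => a • h (A * ζ) + b • h (C * ζ) with hF
    have hmapsA : ∀ D : ℂ, ‖D‖ ≤ 1 → MapsTo (fun ζ => D * ζ) (ball (0:ℂ) 1) (ball (0:ℂ) 1) := by
      intro D hD ζ hζ
      rw [mem_ball_zero_iff] at hζ ⊢
      calc ‖D * ζ‖ = ‖D‖ * ‖ζ‖ := norm_mul _ _
        _ ≤ 1 * ‖ζ‖ := by gcongr
        _ < 1 := by simpa using hζ
    have hFmaps : MapsTo F (ball (0:ℂ) 1) (h '' ball 0 1) := by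
      intro ζ hζ
      exact hconv ⟨A * ζ, hmapsA A hAn hζ, rfl⟩ ⟨C * ζ, hmapsA C hCn hζ, rfl⟩ ha hb hab
    have hFd : DifferentiableOn ℂ F (ball (0:ℂ) 1) := by
      have d1 : DifferentiableOn ℂ (fun ζ => h (A * ζ)) (ball (0:ℂ) 1) :=
        hh.comp ((differentiable_id.const_mul A).differentiableOn) (hmapsA A hAn)
      have d2 : DifferentiableOn ℂ (fun ζ => h (C * ζ)) (ball (0:ℂ) 1) :=
        hh.comp ((differentiable_id.const_mul C).differentiableOn) (hmapsA C hCn)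
      simp only [hF, Complex.real_smul]
      exact (d1.const_mul _).add (d2.const_mul _)
    set g : ℂ → ℂ := fun ζ => k (F ζ) with hg
    have hgd : DifferentiableOn ℂ g (ball (0:ℂ) 1) := hkd.comp hFd hFmaps
    have hgmaps : MapsTo g (ball (0:ℂ) 1) (ball (0:ℂ) 1) := fun ζ hζ => hk3 (hFmaps hζ)
    have hg0 : g 0 = 0 := by
      have : F 0 = h 0 := by
        simp [hF, h0]
      rw [hg]
      simp only [this]
      exact hk1 0 (by simp)
    have hmm : Complex.abs (m:ℂ) < 1 := by
      rw [Complex.abs_ofReal, _root_.abs_of_nonneg hm0]; exact hm1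
    have hsch : Complex.abs (g (m:ℂ)) ≤ Complex.abs (m:ℂ) :=
      Complex.abs_le_abs_of_mapsTo_ball_self hgd hgmaps hg0 hmm
    have hgm : g (m:ℂ) ∈ ball (0:ℂ) r := by
      rw [mem_ball_zero_iff, Complex.norm_eq_abs]
      calc Complex.abs (g (m:ℂ)) ≤ Complex.abs (m:ℂ) := hsch
        _ = m := by rw [Complex.abs_ofReal, _root_.abs_of_nonneg hm0]
        _ < r := hmr
    refine ⟨g (m:ℂ), hgm, ?_⟩
    have hAm : A * (m:ℂ) = z₁ := by rw [hA]; field_simp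
    have hCm : C * (m:ℂ) = z₂ := by rw [hC]; field_simp
    have hFm : F (m:ℂ) = a • h z₁ + b • h z₂ := by rw [hF]; simp [hAm, hCm]
    show h (k (F (m:ℂ))) = a • h z₁ + b • h z₂
    rw [hFm]
    exact hk2 _ (hconv ⟨z₁, by rw [mem_ball_zero_iff]; exact lt_of_lt_of_le hz₁ hr1, rfl⟩
      ⟨z₂, by rw [mem_ball_zero_iff]; exact lt_of_lt_of_le hz₂ hr1, rfl⟩ ha hb hab)

lemma ms_convexity_ineq (h : ℂ → ℂ) (hh : DifferentiableOn ℂ h (ball 0 1))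
    (hinj : InjOn h (ball 0 1)) (h0 : h 0 = 0) (h'0 : deriv h 0 = 1)
    (hsubconv : ∀ r : ℝ, 0 < r → r ≤ 1 → Convex ℝ (h '' ball 0 r))
    (hdne : ∀ z ∈ ball (0:ℂ) 1, deriv h z ≠ 0)
    {z₀ : ℂ} (hz₀ : z₀ ∈ ball (0:ℂ) 1) (hz : z₀ ≠ 0) :
    0 ≤ (1 + z₀ * deriv (deriv h) z₀ / deriv h z₀).re := by
  have hA : AnalyticOnNhd ℂ h (ball 0 1) := hh.analyticOnNhd isOpen_ball
  have hD : DifferentiableOn ℂ (deriv h) (ball 0 1) := hA.deriv.differentiableOn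
  set r : ℝ := Complex.abs z₀ with hr
  have hr0 : 0 < r := by simpa [hr] using hz
  have hr1 : r < 1 := by rwa [mem_ball_zero_iff] at hz₀
  have hballs : ball (0:ℂ) r ⊆ ball 0 1 := ball_subset_ball (le_of_lt hr1)
  have hCconv : Convex ℝ (h '' ball 0 r) := hsubconv r hr0 (le_of_lt hr1)
  have hCopen : IsOpen (h '' ball 0 r) := ms_isOpen_image h hh h'0 hballs isOpen_ball
  have hnotmem : h z₀ ∉ h '' ball (0:ℂ) r := by
    rintro ⟨ζ, hζ, hζe⟩
    have hζ1 : ζ ∈ ball (0:ℂ) 1 := hballs hζ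
    have : ζ = z₀ := hinj hζ1 hz₀ hζe
    rw [mem_ball_zero_iff, this] at hζ
    exact lt_irrefl _ hζ
  obtain ⟨L, hL⟩ := geometric_hahn_banach_open_point hCconv hCopen hnotmem
  -- represent L by a complex number μ
  set μ : ℂ := Complex.ofReal (L 1) - Complex.ofReal (L Complex.I) * Complex.I with hμdef
  have hLw : ∀ w : ℂ, L w = (μ * w).re := by
    intro w
    have hw : w = w.re • (1:ℂ) + w.im • Complex.I := by
      simp [Complex.real_smul, Complex.re_add_im]
    calc L w = L (w.re • (1:ℂ) + w.im • Complex.I) := by rw [← hw]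
      _ = w.re * L 1 + w.im * L Complex.I := by
          rw [map_add, map_smul, map_smul]; simp [smul_eq_mul]
      _ = (μ * w).re := by
          simp [hμdef, Complex.mul_re, Complex.sub_re, Complex.sub_im, Complex.mul_im]
          ring
  have hμne : μ ≠ 0 := by
    intro hμ0
    have h1 : L (h z₀) = 0 := by rw [hLw, hμ0, zero_mul, Complex.zero_re]
    have h2 : L 0 < L (h z₀) := by
      have : (0:ℂ) ∈ h '' ball (0:ℂ) r := ⟨0, by simpa [mem_ball_zero_iff] using hr0, h0⟩
      exact hL _ this
    rw [map_zero, h1] at h2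
    exact lt_irrefl _ h2
  -- the maximum property on the closure
  have hmax_cl : ∀ w ∈ closure (h '' ball (0:ℂ) r), L w ≤ L (h z₀) := by
    intro w hw
    have hclosed : IsClosed {w : ℂ | L w ≤ L (h z₀)} := isClosed_le L.continuous continuous_const
    exact closure_minimal (fun x hx => le_of_lt (hL x hx)) hclosed hw
  have himg_cl : ∀ ζ : ℂ, Complex.abs ζ ≤ r → L (h ζ) ≤ L (h z₀) := by
    intro ζ hζ
    apply hmax_cl
    have h1 : ζ ∈ closure (ball (0:ℂ) r) := by
      rw [closure_ball 0 (ne_of_gt hr0), mem_closedBall_zero_iff]; exact hζ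
    have h2 : ContinuousOn h (closure (ball (0:ℂ) r)) := by
      apply hh.continuousOn.mono
      rw [closure_ball 0 (ne_of_gt hr0)]
      intro x hx
      rw [mem_ball_zero_iff]
      exact lt_of_le_of_lt (mem_closedBall_zero_iff.1 hx) hr1
    exact h2.image_closure ⟨ζ, h1, rfl⟩
  -- curve and radial functions
  set c : ℝ → ℂ := fun θ => z₀ * Complex.exp (θ * Complex.I) with hc
  have hcb : ∀ θ : ℝ, Complex.abs (c θ) = r := by
    intro θ
    rw [hc]
    simp [Complex.abs_exp, hr]
  have hcball : ∀ θ : ℝ, c θ ∈ ball (0:ℂ) 1 := by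
    intro θ
    rw [mem_ball_zero_iff, Complex.norm_eq_abs, hcb θ]; exact hr1
  set u : ℝ → ℝ := fun θ => (μ * h (c θ)).re with hu
  set v : ℝ → ℝ := fun θ => (μ * (deriv h (c θ) * (c θ * Complex.I))).re with hv
  -- derivative facts
  have hcd : ∀ θ : ℝ, HasDerivAt (fun z : ℂ => z₀ * Complex.exp (z * Complex.I))
      (c θ * Complex.I) (θ : ℂ) := by
    intro θ
    have h1 : HasDerivAt (fun z : ℂ => z * Complex.I) Complex.I (θ:ℂ) := by
      simpa using (hasDerivAt_id (θ:ℂ)).mul_const Complex.I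
    have h2 := h1.cexp
    have h3 := h2.const_mul z₀
    refine h3.congr_deriv (Eq.symm ?_)
    rw [hc]; ring
  have hude : ∀ θ : ℝ, HasDerivAt u (v θ) θ := by
    intro θ
    have hhd : HasDerivAt h (deriv h (c θ)) (c θ) :=
      (hh.differentiableAt (isOpen_ball.mem_nhds (hcball θ))).hasDerivAt
    have hcomp : HasDerivAt (fun z : ℂ => h (z₀ * Complex.exp (z * Complex.I)))
        (deriv h (c θ) * (c θ * Complex.I)) (θ:ℂ) := by
      exact HasDerivAt.comp (θ:ℂ) (by rw [hc] at hhd ⊢; exact hhd) (hcd θ)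
    have hcomp2 := (hcomp.const_mul μ).comp_ofReal
    have := Complex.reCLM.hasFDerivAt.comp_hasDerivAt θ hcomp2
    simpa [hu, hv, hc, Function.comp_def] using this
  have humax : ∀ θ : ℝ, u θ ≤ u 0 := by
    intro θ
    have h1 : u θ = L (h (c θ)) := by rw [hLw]
    have h2 : u 0 = L (h z₀) := by
      rw [hLw, hu]
      congr 2
      rw [hc]; simp
    rw [h1, h2]
    exact himg_cl (c θ) (le_of_eq (hcb θ))
  -- first derivative zero at 0
  have hv0 : v 0 = 0 := by
    have hloc : IsLocalMax u 0 := Filter.Eventually.of_forall humax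
    exact hloc.hasDerivAt_eq_zero (hude 0)
  -- v 0 in complex terms
  set cc : ℂ := μ * (deriv h z₀ * z₀) with hcc
  have hc0 : c 0 = z₀ := by rw [hc]; simp
  have hv0' : (cc * Complex.I).re = 0 := by
    have heq : v 0 = (cc * Complex.I).re := by
      show (μ * (deriv h (c 0) * (c 0 * Complex.I))).re = (cc * Complex.I).re
      rw [hc0, hcc]
      congr 1
      ring
    rw [← heq, hv0]
  have hccim : cc.im = 0 := by
    have := hv0'
    rw [Complex.mul_re, Complex.I_re, Complex.I_im] at this
    simpa using this
  -- second derivative test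
  have hvd : HasDerivAt v (μ * (-(z₀^2 * deriv (deriv h) z₀) - z₀ * deriv h z₀)).re 0 := by
    have hhd2 : HasDerivAt (deriv h) (deriv (deriv h) z₀) z₀ :=
      (hD.differentiableAt (isOpen_ball.mem_nhds hz₀)).hasDerivAt
    have hinner : HasDerivAt (fun z : ℂ => deriv h (z₀ * Complex.exp (z * Complex.I)) *
        (z₀ * Complex.exp (z * Complex.I) * Complex.I))
        (-(z₀^2 * deriv (deriv h) z₀) - z₀ * deriv h z₀) 0 := by
      have ha9 : HasDerivAt (deriv h) (deriv (deriv h) z₀)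
          ((fun z : ℂ => z₀ * Complex.exp (z * Complex.I)) (0:ℂ)) := by
        simpa using hhd2
      have ha : HasDerivAt (fun z : ℂ => deriv h (z₀ * Complex.exp (z * Complex.I)))
          (deriv (deriv h) z₀ * (c 0 * Complex.I)) (0:ℂ) :=
        (HasDerivAt.comp (0:ℂ) ha9 (hcd 0) :)
      have hb : HasDerivAt (fun z : ℂ => z₀ * Complex.exp (z * Complex.I) * Complex.I)
          (c 0 * Complex.I * Complex.I) (0:ℂ) := by
        simpa using (by simpa using hcd 0 : HasDerivAt _ (c 0 * Complex.I) (0:ℂ)).mul_const Complex.I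
      have := ha.mul hb
      refine this.congr_deriv (Eq.symm ?_)
      rw [hc0]
      simp
      linear_combination (-(z₀^2 * deriv (deriv h) z₀ + z₀ * deriv h z₀)) * Complex.I_sq
    have hcomp2 := (hinner.const_mul μ).comp_ofReal
    have := Complex.reCLM.hasFDerivAt.comp_hasDerivAt 0 hcomp2
    have heq : (fun θ : ℝ => (μ * (deriv h (z₀ * Complex.exp ((θ:ℂ) * Complex.I)) *
        (z₀ * Complex.exp ((θ:ℂ) * Complex.I) * Complex.I))).re) = v := by
      funext θ; rw [hv, hc]
    rw [← heq]
    exact this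
  have hsecond : (μ * (-(z₀^2 * deriv (deriv h) z₀) - z₀ * deriv h z₀)).re ≤ 0 :=
    ms_second_test hude hvd hv0 humax
  -- radial derivative
  have hccre : 0 ≤ cc.re := by
    set vr : ℝ → ℝ := fun t => (μ * h ((t:ℂ) * z₀)).re with hvr
    have hvrd : HasDerivAt vr cc.re 1 := by
      have hhd : HasDerivAt h (deriv h z₀) z₀ :=
        (hh.differentiableAt (isOpen_ball.mem_nhds hz₀)).hasDerivAt
      have hlin : HasDerivAt (fun z : ℂ => z * z₀) z₀ (1:ℂ) := by
        simpa using (hasDerivAt_id (1:ℂ)).mul_const z₀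
      have hcomp : HasDerivAt (fun z : ℂ => h (z * z₀)) (deriv h z₀ * z₀) (1:ℂ) := by
        have hq : HasDerivAt h (deriv h z₀) ((fun z : ℂ => z * z₀) (1:ℂ)) := by
          simp only [one_mul]; exact hhd
        exact HasDerivAt.comp (1:ℂ) hq hlin
      have hcomp2 := (hcomp.const_mul μ).comp_ofReal
      have := Complex.reCLM.hasFDerivAt.comp_hasDerivAt 1 hcomp2
      have heq : cc = μ * (deriv h z₀ * z₀) := hcc
      simpa [hvr, heq, mul_assoc, Function.comp_def] using this
    apply ms_left_deriv_nonneg hvrd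
    intro t ht0 ht1
    have h1 : vr t = L (h ((t:ℂ) * z₀)) := by rw [hLw]
    have h2 : vr 1 = L (h z₀) := by
      show (μ * h ((1:ℝ) * z₀)).re = L (h z₀)
      rw [hLw]
      norm_num
    rw [h1, h2]
    apply le_of_lt
    apply hL
    refine ⟨(t:ℂ) * z₀, ?_, rfl⟩
    rw [mem_ball_zero_iff]
    rw [norm_mul]
    simp only [Complex.norm_real, Real.norm_eq_abs, _root_.abs_of_nonneg ht0]
    calc t * ‖z₀‖ < 1 * ‖z₀‖ := by
          apply mul_lt_mul_of_pos_right ht1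
          simpa [hr] using hr0
      _ = r := by rw [one_mul]; rfl
  have hccpos : 0 < cc.re := by
    rcases lt_or_eq_of_le hccre with h | h
    · exact h
    · exfalso
      apply hμne
      have hccne : cc ≠ 0 := by
        rw [hcc]
        exact mul_ne_zero hμne (mul_ne_zero (hdne z₀ hz₀) hz)
      apply absurd _ hccne
      rw [Complex.ext_iff]
      constructor
      · rw [← h]; rfl
      · rw [hccim]; rfl
  -- final algebra
  set ξ : ℂ := z₀ * deriv (deriv h) z₀ / deriv h z₀ with hξ
  have hkey : μ * (z₀^2 * deriv (deriv h) z₀) = cc * ξ := by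
    rw [hcc, hξ]
    field_simp [hdne z₀ hz₀]
  have hineq : -cc.re ≤ (cc * ξ).re := by
    have hexp : (μ * (-(z₀^2 * deriv (deriv h) z₀) - z₀ * deriv h z₀)).re
        = -(cc * ξ).re - cc.re := by
      rw [← hkey, hcc]
      have : μ * (-(z₀ ^ 2 * deriv (deriv h) z₀) - z₀ * deriv h z₀)
          = -(μ * (z₀ ^ 2 * deriv (deriv h) z₀)) - μ * (deriv h z₀ * z₀) := by ring
      rw [this]
      simp [Complex.sub_re, Complex.neg_re]
    rw [hexp] at hsecond
    linarith
  have hcre : (cc * ξ).re = cc.re * ξ.re := by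
    rw [Complex.mul_re, hccim]
    ring
  rw [hcre] at hineq
  have hξre : -1 ≤ ξ.re := by
    nlinarith [hccpos, hineq]
  rw [Complex.add_re, Complex.one_re]
  linarith

lemma ms_strict {f : ℂ → ℂ} {cst : ℝ} (hf : AnalyticOnNhd ℂ f (ball 0 1))
    (hf0 : f 0 = 1) (hc : cst < 1) (hge : ∀ z ∈ ball (0:ℂ) 1, cst ≤ (f z).re) :
    ∀ z ∈ ball (0:ℂ) 1, cst < (f z).re := by
  intro z hzB
  rcases hf.is_constant_or_isOpen (convex_ball _ _).isPreconnected with ⟨w, hw⟩ | H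
  · have h1 : f z = 1 := by rw [hw z hzB, ← hw 0 (by simp), hf0]
    rw [h1]
    simpa using hc
  · rcases lt_or_eq_of_le (hge z hzB) with h | h
    · exact h
    · exfalso
      have hopen : IsOpen (f '' ball 0 1) := H _ Subset.rfl isOpen_ball
      have hmem : f z ∈ f '' ball 0 1 := ⟨z, hzB, rfl⟩
      rcases Metric.isOpen_iff.1 hopen _ hmem with ⟨ε, hε, hball⟩
      have hmem2 : f z - ((ε/2 : ℝ) : ℂ) ∈ f '' ball 0 1 := by
        apply hball
        rw [mem_ball, dist_eq_norm]
        have heq : f z - ((ε/2:ℝ):ℂ) - f z = -((ε/2:ℝ):ℂ) := by ring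
        rw [heq, norm_neg, Complex.norm_real, Real.norm_eq_abs,
          _root_.abs_of_nonneg (by linarith)]
        linarith
      rcases hmem2 with ⟨z', hz', hz'e⟩
      have hge' := hge z' hz'
      rw [hz'e, Complex.sub_re, Complex.ofReal_re, ← h] at hge'
      linarith

lemma ms_jack {w : ℂ → ℂ} (hw : DifferentiableOn ℂ w (ball 0 1)) (h0 : w 0 = 0)
    {z₀ : ℂ} (hz₀ : z₀ ∈ ball (0:ℂ) 1) (hz : z₀ ≠ 0)
    (hmax : ∀ z : ℂ, Complex.abs z ≤ Complex.abs z₀ → Complex.abs (w z) ≤ 1)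
    (hone : Complex.abs (w z₀) = 1) :
    ∃ k : ℝ, 1 ≤ k ∧ z₀ * deriv w z₀ = (k:ℂ) * w z₀ := by
  set r : ℝ := Complex.abs z₀ with hr
  have hr0 : 0 < r := by simpa [hr] using hz
  have hr1 : r < 1 := by rwa [mem_ball_zero_iff] at hz₀
  set R : ℝ := 1/r with hR
  have hR1 : 1 < R := by rw [hR, lt_div_iff₀ hr0]; linarith
  have hR0 : 0 < R := lt_trans one_pos hR1
  have hwne : w z₀ ≠ 0 := by
    intro hcontra
    rw [hcontra] at hone
    simp at hone
  set g : ℂ → ℂ := fun ζ => w (z₀ * ζ) / w z₀ with hg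
  have hmapsR : MapsTo (fun ζ : ℂ => z₀ * ζ) (ball 0 R) (ball 0 1) := by
    intro ζ hζ
    rw [mem_ball_zero_iff] at hζ ⊢
    calc ‖z₀ * ζ‖ = r * ‖ζ‖ := by rw [norm_mul]; rfl
      _ < r * R := mul_lt_mul_of_pos_left hζ hr0
      _ = 1 := by rw [hR]; field_simp
  have hgd : DifferentiableOn ℂ g (ball 0 R) := by
    apply DifferentiableOn.div_const
    exact hw.comp ((differentiable_id.const_mul z₀).differentiableOn) hmapsR
  have hg0 : g 0 = 0 := by rw [hg]; simp [h0]
  have hg1 : g 1 = 1 := by rw [hg]; simp [div_self hwne]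
  have hgle : ∀ ζ : ℂ, Complex.abs ζ ≤ 1 → Complex.abs (g ζ) ≤ 1 := by
    intro ζ hζ
    rw [hg]
    simp only [map_div₀]
    rw [hone, div_one]
    apply hmax
    rw [map_mul]
    calc Complex.abs z₀ * Complex.abs ζ ≤ Complex.abs z₀ * 1 :=
          mul_le_mul_of_nonneg_left hζ (Complex.abs.nonneg _)
      _ = Complex.abs z₀ := mul_one _
  set ω : ℂ → ℂ := dslope g 0 with hω
  have hballR : ball (0:ℂ) R ∈ 𝓝 (0:ℂ) :=
    isOpen_ball.mem_nhds (by simpa [mem_ball_zero_iff] using hR0)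
  have hωd : DifferentiableOn ℂ ω (ball 0 R) := (differentiableOn_dslope hballR).2 hgd
  have hω1 : ω 1 = 1 := by
    rw [hω, dslope_of_ne g one_ne_zero, slope_def_field, hg1, hg0]
    simp
  have h1R : (1:ℂ) ∈ ball (0:ℂ) R := by
    rw [mem_ball_zero_iff]
    simpa using hR1
  have hωle : ∀ ζ : ℂ, Complex.abs ζ ≤ 1 → Complex.abs (ω ζ) ≤ 1 := by
    have hopen : ∀ ζ : ℂ, Complex.abs ζ < 1 → Complex.abs (ω ζ) ≤ 1 := by
      intro ζ hζ
      apply le_of_forall_pos_le_add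
      intro ε hε
      have hmaps2 : MapsTo g (ball 0 1) (ball (g 0) (1+ε)) := by
        intro x hx
        rw [mem_ball_zero_iff] at hx
        rw [hg0, mem_ball_zero_iff]
        calc ‖g x‖ ≤ 1 := hgle x (le_of_lt hx)
          _ < 1 + ε := by linarith
      have := Complex.norm_dslope_le_div_of_mapsTo_ball
        (hgd.mono (ball_subset_ball (le_of_lt hR1))) (hmaps2.mono_right ball_subset_closedBall)
        (mem_ball_zero_iff.2 hζ)
      simpa [Complex.norm_eq_abs, hω] using this
    intro ζ hζ
    rcases lt_or_eq_of_le hζ with hlt | heq1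
    · exact hopen ζ hlt
    · have hcont : ContinuousAt ω ζ := by
        apply (hωd.differentiableAt (isOpen_ball.mem_nhds _)).continuousAt
        rw [mem_ball_zero_iff, Complex.norm_eq_abs, heq1]
        exact hR1
      have htend : Tendsto (fun t : ℝ => ω ((t:ℂ) * ζ)) (𝓝[<] (1:ℝ)) (𝓝 (ω ζ)) := by
        apply hcont.tendsto.comp
        have h1 : Tendsto (fun t : ℝ => (t:ℂ) * ζ) (𝓝 (1:ℝ)) (𝓝 ζ) := by
          have hc2 : Continuous (fun t : ℝ => (t:ℂ) * ζ) :=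
            Complex.continuous_ofReal.mul continuous_const
          have := hc2.tendsto (1:ℝ)
          simpa using this
        exact h1.mono_left nhdsWithin_le_nhds
      have hev : ∀ᶠ t : ℝ in 𝓝[<] (1:ℝ), Complex.abs (ω ((t:ℂ) * ζ)) ≤ 1 := by
        filter_upwards [Ioo_mem_nhdsLT_of_mem
          (by constructor <;> norm_num : (1:ℝ) ∈ Ioc 0 1)] with t ht
        apply hopen
        rw [map_mul, ← heq1, Complex.abs_ofReal, _root_.abs_of_nonneg (le_of_lt ht.1)]
        nlinarith [ht.2, ht.1, Complex.abs.nonneg ζ, heq1]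
      exact le_of_tendsto ((Complex.continuous_abs.tendsto (ω ζ)).comp htend) hev
  have hωdiff1 : DifferentiableAt ℂ ω 1 := hωd.differentiableAt (isOpen_ball.mem_nhds h1R)
  set d : ℂ := deriv ω 1 with hd
  have hωhas : HasDerivAt ω d 1 := hωdiff1.hasDerivAt
  -- radial : 0 ≤ d.re
  have hdre : 0 ≤ d.re := by
    have hω' : HasDerivAt ω d ((1:ℝ):ℂ) := by
      simpa using hωhas
    have h1 := hω'.comp_ofReal
    have hreal := Complex.reCLM.hasFDerivAt.comp_hasDerivAt 1 h1
    apply ms_left_deriv_nonneg hreal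
    intro t ht0 ht1
    have hle : Complex.abs (ω (t:ℂ)) ≤ 1 :=
      hωle _ (by rw [Complex.abs_ofReal, _root_.abs_of_nonneg ht0]; linarith)
    show (ω ((t:ℝ):ℂ)).re ≤ (ω ((1:ℝ):ℂ)).re
    have h2 : (ω ((1:ℝ):ℂ)).re = 1 := by norm_num [hω1]
    rw [h2]
    calc (ω ((t:ℝ):ℂ)).re ≤ Complex.abs (ω ((t:ℝ):ℂ)) := Complex.re_le_abs _
      _ ≤ 1 := hle
  -- tangential : d.im = 0
  have hdim : d.im = 0 := by
    set A : ℝ → ℂ := fun θ => ω (Complex.exp ((θ:ℂ) * Complex.I)) with hA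
    have hA0 : A 0 = 1 := by rw [hA]; simp [hω1]
    have hAder : HasDerivAt A (d * Complex.I) 0 := by
      have hexp : HasDerivAt (fun z : ℂ => Complex.exp (z * Complex.I)) Complex.I 0 := by
        have h1 : HasDerivAt (fun z : ℂ => z * Complex.I) Complex.I (0:ℂ) := by
          simpa using (hasDerivAt_id (0:ℂ)).mul_const Complex.I
        have h2 := h1.cexp
        simpa using h2
      have hω' : HasDerivAt ω d ((fun z : ℂ => Complex.exp (z * Complex.I)) 0) := by
        simp only [zero_mul, Complex.exp_zero]
        exact hωhas
      have h3 := HasDerivAt.comp (0:ℂ) hω' hexp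
      have h4 := h3.comp_ofReal
      simpa [hA] using h4
    have hre : HasDerivAt (fun θ : ℝ => (A θ).re) ((d*Complex.I).re) 0 :=
      Complex.reCLM.hasFDerivAt.comp_hasDerivAt 0 hAder
    have him : HasDerivAt (fun θ : ℝ => (A θ).im) ((d*Complex.I).im) 0 :=
      Complex.imCLM.hasFDerivAt.comp_hasDerivAt 0 hAder
    set ψ : ℝ → ℝ := fun θ => (A θ).re^2 + (A θ).im^2 with hψ
    have hψder : HasDerivAt ψ
        (2*(A 0).re^1*((d*Complex.I).re) + 2*(A 0).im^1*((d*Complex.I).im)) 0 := by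
      have h5 := hre.pow 2
      have h6 := him.pow 2
      have h7 := h5.add h6
      norm_num at h7 ⊢
      exact h7
    have hψmax : IsLocalMax ψ 0 := by
      apply Filter.Eventually.of_forall
      intro θ
      have hψθ : ψ θ = (Complex.abs (A θ))^2 := by
        rw [hψ, Complex.sq_abs, Complex.normSq_apply]
        ring
      have hψ0 : ψ 0 = 1 := by
        show (A 0).re^2 + (A 0).im^2 = 1
        rw [hA0]
        simp
      rw [hψθ, hψ0]
      have habs : Complex.abs (A θ) ≤ 1 := by
        rw [hA]
        apply hωle
        rw [Complex.abs_exp]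
        simp
      nlinarith [Complex.abs.nonneg (A θ)]
    have := hψmax.hasDerivAt_eq_zero hψder
    rw [hA0] at this
    simp [Complex.mul_I_re] at this
    exact this
  -- derivative identities
  have hfun : ∀ ζ : ℂ, g ζ = ζ * ω ζ := by
    intro ζ
    have hs := sub_smul_dslope g 0 ζ
    rw [sub_zero, hg0, sub_zero, smul_eq_mul] at hs
    rw [hω]
    exact hs.symm
  have hder1 : HasDerivAt g (1 * ω 1 + 1 * d) 1 := by
    have hF : HasDerivAt (fun ζ : ℂ => ζ * ω ζ) (1 * ω 1 + 1 * d) 1 :=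
      (hasDerivAt_id 1).mul hωhas
    have hgF : g = fun ζ : ℂ => ζ * ω ζ := funext hfun
    rw [hgF]
    exact hF
  have hder2 : HasDerivAt g (deriv w z₀ * z₀ / w z₀) 1 := by
    have hwd : HasDerivAt w (deriv w z₀) z₀ :=
      (hw.differentiableAt (isOpen_ball.mem_nhds hz₀)).hasDerivAt
    have hlin : HasDerivAt (fun ζ : ℂ => z₀ * ζ) z₀ 1 := by
      simpa using (hasDerivAt_id (1:ℂ)).const_mul z₀
    have hq : HasDerivAt w (deriv w z₀) ((fun ζ : ℂ => z₀ * ζ) 1) := by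
      simp only [mul_one]
      exact hwd
    have hcomp := HasDerivAt.comp (1:ℂ) hq hlin
    exact hcomp.div_const (w z₀)
  have hEq : 1 * ω 1 + 1 * d = deriv w z₀ * z₀ / w z₀ := hder1.unique hder2
  refine ⟨1 + d.re, by linarith, ?_⟩
  have hcast : ((1 + d.re : ℝ):ℂ) = 1 + d := by
    rw [Complex.ext_iff]
    constructor
    · simp
    · simp [hdim]
  rw [hcast]
  have h5 : deriv w z₀ * z₀ = (1 * ω 1 + 1 * d) * w z₀ := by
    rw [hEq]
    field_simp
  rw [hω1] at h5
  calc z₀ * deriv w z₀ = deriv w z₀ * z₀ := by ring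
    _ = (1*1 + 1*d) * w z₀ := h5
    _ = (1 + d) * w z₀ := by ring

lemma ms_select {w : ℂ → ℂ} (hw : DifferentiableOn ℂ w (ball 0 1)) (h0 : w 0 = 0)
    {z₁ : ℂ} (hz₁ : z₁ ∈ ball (0:ℂ) 1) (h1 : 1 ≤ Complex.abs (w z₁)) :
    ∃ z₀ ∈ ball (0:ℂ) 1, z₀ ≠ 0 ∧ Complex.abs (w z₀) = 1 ∧
      ∀ z : ℂ, Complex.abs z ≤ Complex.abs z₀ → Complex.abs (w z) ≤ 1 := by
  rw [mem_ball_zero_iff] at hz₁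
  have hsubB : closedBall (0:ℂ) ‖z₁‖ ⊆ ball 0 1 := by
    intro x hx
    rw [mem_closedBall_zero_iff] at hx
    rw [mem_ball_zero_iff]
    exact lt_of_le_of_lt hx hz₁
  set S : Set ℂ := closedBall (0:ℂ) ‖z₁‖ ∩ (fun z => Complex.abs (w z)) ⁻¹' (Ici 1) with hS
  have hScont : ContinuousOn (fun z => Complex.abs (w z)) (closedBall (0:ℂ) ‖z₁‖) :=
    (Complex.continuous_abs.comp_continuousOn (hw.continuousOn.mono hsubB))
  have hSclosed : IsClosed S :=
    hScont.preimage_isClosed_of_isClosed isClosed_closedBall isClosed_Ici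
  have hScompact : IsCompact S :=
    (isCompact_closedBall (0:ℂ) ‖z₁‖).of_isClosed_subset hSclosed inter_subset_left
  have hz₁S : z₁ ∈ S := by
    rw [hS]
    simp only [mem_inter_iff, mem_preimage, mem_Ici]
    exact ⟨by rw [mem_closedBall_zero_iff], h1⟩
  have hSne : S.Nonempty := ⟨z₁, hz₁S⟩
  obtain ⟨z₀, hz₀S, hz₀min⟩ := hScompact.exists_isMinOn hSne
    (Complex.continuous_abs.continuousOn)
  have hz₀w : 1 ≤ Complex.abs (w z₀) := by
    have := hz₀S.2
    simpa using this
  have hz₀ne : z₀ ≠ 0 := by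
    intro hc
    rw [hc, h0] at hz₀w
    simp only [map_zero] at hz₀w
    linarith
  have hz₀le : ‖z₀‖ ≤ ‖z₁‖ := mem_closedBall_zero_iff.1 hz₀S.1
  have hz₀B : z₀ ∈ ball (0:ℂ) 1 := by
    rw [mem_ball_zero_iff]; exact lt_of_le_of_lt hz₀le hz₁
  have hlt : ∀ z : ℂ, Complex.abs z < Complex.abs z₀ → Complex.abs (w z) < 1 := by
    intro z hzlt
    by_contra hge
    push_neg at hge
    have hzS : z ∈ S := by
      rw [hS]
      simp only [mem_inter_iff, mem_preimage, mem_Ici]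
      refine ⟨?_, hge⟩
      rw [mem_closedBall_zero_iff]
      calc ‖z‖ ≤ ‖z₀‖ := le_of_lt hzlt
        _ ≤ ‖z₁‖ := hz₀le
    have := hz₀min hzS
    exact absurd hzlt (not_lt.2 this)
  have hle : ∀ z : ℂ, Complex.abs z ≤ Complex.abs z₀ → Complex.abs (w z) ≤ 1 := by
    intro z hzle
    rcases lt_or_eq_of_le hzle with hzlt | hzeq
    · exact le_of_lt (hlt z hzlt)
    · -- radial limit
      have hzB : z ∈ ball (0:ℂ) 1 := by
        rw [mem_ball_zero_iff, Complex.norm_eq_abs, hzeq]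
        rw [mem_ball_zero_iff] at hz₀B
        exact hz₀B
      have hcont : ContinuousAt w z :=
        (hw.differentiableAt (isOpen_ball.mem_nhds hzB)).continuousAt
      have htend : Tendsto (fun t : ℝ => w ((t:ℂ) * z)) (𝓝[<] (1:ℝ)) (𝓝 (w z)) := by
        apply hcont.tendsto.comp
        have hc2 : Continuous (fun t : ℝ => (t:ℂ) * z) :=
          Complex.continuous_ofReal.mul continuous_const
        have := hc2.tendsto (1:ℝ)
        simp only [Complex.ofReal_one, one_mul] at this
        exact this.mono_left nhdsWithin_le_nhds
      have habs0 : 0 < Complex.abs z₀ := by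
        simpa using hz₀ne
      have hev : ∀ᶠ t : ℝ in 𝓝[<] (1:ℝ), Complex.abs (w ((t:ℂ) * z)) ≤ 1 := by
        filter_upwards [Ioo_mem_nhdsLT_of_mem
          (by constructor <;> norm_num : (1:ℝ) ∈ Ioc 0 1)] with t ht
        apply le_of_lt
        apply hlt
        rw [map_mul, Complex.abs_ofReal, _root_.abs_of_nonneg (le_of_lt ht.1), hzeq]
        nlinarith [ht.2, ht.1]
      exact le_of_tendsto ((Complex.continuous_abs.tendsto (w z)).comp htend) hev
  have habs1 : Complex.abs (w z₀) = 1 :=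
    le_antisymm (hle z₀ (le_refl _)) hz₀w
  exact ⟨z₀, hz₀B, hz₀ne, habs1, hle⟩

theorem stmt11 (h : ℂ → ℂ)
    (hh : DifferentiableOn ℂ h (Metric.ball 0 1))
    (hinj : Set.InjOn h (Metric.ball 0 1))
    (h0 : h 0 = 0) (h'0 : deriv h 0 = 1)
    (hconv : Convex ℝ (h '' Metric.ball 0 1)) :
    ∀ z ∈ Metric.ball (0 : ℂ) 1, z ≠ 0 → (1 : ℝ) / 2 < (h z / z).re := by
  obtain ⟨k, hk1, hk2, hk3, hkd, hdne⟩ := ms_inverse h hh hinj h'0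
  have hsubconv : ∀ r : ℝ, 0 < r → r ≤ 1 → Convex ℝ (h '' ball 0 r) :=
    fun r hr0 hr1 => ms_subball_convex h k hh h0 hconv hk1 hk2 hk3 hkd hr0 hr1
  have hA : AnalyticOnNhd ℂ h (ball 0 1) := hh.analyticOnNhd isOpen_ball
  have hD : DifferentiableOn ℂ (deriv h) (ball 0 1) := hA.deriv.differentiableOn
  -- the function Q = 1 + z h''/h'
  set Q : ℂ → ℂ := fun z => 1 + z * deriv (deriv h) z / deriv h z with hQdef
  have hQa : AnalyticOnNhd ℂ Q (ball 0 1) := by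
    apply AnalyticOnNhd.add analyticOnNhd_const
    exact AnalyticOnNhd.div (analyticOnNhd_id.mul hA.deriv.deriv) hA.deriv hdne
  have hQ0 : Q 0 = 1 := by rw [hQdef]; simp
  have hQge : ∀ z ∈ ball (0:ℂ) 1, 0 ≤ (Q z).re := by
    intro z hz
    by_cases hz0 : z = 0
    · rw [hz0, hQ0]; norm_num
    · exact ms_convexity_ineq h hh hinj h0 h'0 hsubconv hdne hz hz0
  have hQpos : ∀ z ∈ ball (0:ℂ) 1, 0 < (Q z).re :=
    ms_strict hQa hQ0 (by norm_num) hQge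
  -- the function P = h z / z and p = z h'/h
  set P : ℂ → ℂ := dslope h 0 with hPdef
  have hPd : DifferentiableOn ℂ P (ball 0 1) :=
    (differentiableOn_dslope (isOpen_ball.mem_nhds (by simp))).2 hh
  have hP0 : P 0 = 1 := by rw [hPdef, dslope_same]; exact h'0
  have hPz : ∀ z : ℂ, z ≠ 0 → P z = h z / z := by
    intro z hz
    rw [hPdef, dslope_of_ne h hz, slope_def_field, h0, sub_zero, sub_zero]
  have hPne : ∀ z ∈ ball (0:ℂ) 1, P z ≠ 0 := by
    intro z hzB'
    by_cases hz0 : z = 0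
    · rw [hz0, hP0]; exact one_ne_zero
    · rw [hPz z hz0]
      apply div_ne_zero _ hz0
      intro hh0
      exact hz0 (hinj hzB' (by simp) (by rw [hh0, h0]))
  have hhP : ∀ z : ℂ, h z = z * P z := by
    intro z
    have h5 := sub_smul_dslope h 0 z
    rw [sub_zero, h0, sub_zero, smul_eq_mul] at h5
    rw [hPdef]
    exact h5.symm
  have hderP : ∀ z ∈ ball (0:ℂ) 1, deriv h z = P z + z * deriv P z := by
    intro z hzB'
    have hPda : HasDerivAt P (deriv P z) z :=
      (hPd.differentiableAt (isOpen_ball.mem_nhds hzB')).hasDerivAt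
    have hF : HasDerivAt (fun ζ : ℂ => ζ * P ζ) (1 * P z + z * deriv P z) z :=
      (hasDerivAt_id z).mul hPda
    have hfun : h = fun ζ : ℂ => ζ * P ζ := funext hhP
    have h6 : HasDerivAt h (1 * P z + z * deriv P z) z := by rw [hfun]; exact hF
    rw [h6.deriv]
    ring
  set p : ℂ → ℂ := fun z => deriv h z / P z with hpdef
  have hpd : DifferentiableOn ℂ p (ball 0 1) := hD.div hPd hPne
  have hp0 : p 0 = 1 := by rw [hpdef]; simp [h'0, hP0]
  have hpne : ∀ z ∈ ball (0:ℂ) 1, p z ≠ 0 :=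
    fun z hz' => div_ne_zero (hdne z hz') (hPne z hz')
  -- STEP 4 : Re p > 1/2 on the ball
  have hpgt : ∀ z ∈ ball (0:ℂ) 1, 1/2 < (p z).re := by
    intro z' hz'B
    by_contra hle
    push_neg at hle
    set w1 : ℂ → ℂ := fun z => (p z - 1) / p z with hw1def
    have hw1d : DifferentiableOn ℂ w1 (ball 0 1) :=
      (hpd.sub (differentiableOn_const 1)).div hpd hpne
    have hw10 : w1 0 = 0 := by rw [hw1def]; simp [hp0]
    have hge1 : 1 ≤ Complex.abs (w1 z') := by
      have habsle : Complex.abs (p z') ≤ Complex.abs (p z' - 1) := by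
        have h1 : Complex.abs (p z') ^ 2 ≤ Complex.abs (p z' - 1) ^ 2 := by
          rw [Complex.sq_abs, Complex.sq_abs, Complex.normSq_apply, Complex.normSq_apply,
            Complex.sub_re, Complex.sub_im, Complex.one_re, Complex.one_im]
          nlinarith [hle]
        nlinarith [Complex.abs.nonneg (p z'), Complex.abs.nonneg (p z' - 1)]
      show (1:ℝ) ≤ Complex.abs ((p z' - 1) / p z')
      rw [map_div₀, le_div_iff₀ (by simpa using hpne z' hz'B), one_mul]
      exact habsle
    obtain ⟨z₀, hz₀B, hz₀ne, habs1, hlemax⟩ := ms_select hw1d hw10 hz'B hge1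
    obtain ⟨K, hK1, hKeq⟩ := ms_jack hw1d hw10 hz₀B hz₀ne hlemax habs1
    set σ : ℂ := w1 z₀ with hσdef
    have hAzne : p z₀ ≠ 0 := hpne z₀ hz₀B
    have hPzne : P z₀ ≠ 0 := hPne z₀ hz₀B
    have hH1ne : deriv h z₀ ≠ 0 := hdne z₀ hz₀B
    have hσval : σ = (p z₀ - 1) / p z₀ := rfl
    have hAσ : p z₀ * (1 - σ) = 1 := by
      rw [hσval]
      field_simp
      ring
    have hσne1 : σ ≠ 1 := by
      intro hc
      rw [hc] at hAσ
      simp at hAσ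
    -- derivative computations at z₀
    have hPda : HasDerivAt P (deriv P z₀) z₀ :=
      (hPd.differentiableAt (isOpen_ball.mem_nhds hz₀B)).hasDerivAt
    have hH1da : HasDerivAt (deriv h) (deriv (deriv h) z₀) z₀ :=
      (hD.differentiableAt (isOpen_ball.mem_nhds hz₀B)).hasDerivAt
    set pv : ℂ := (deriv (deriv h) z₀ * P z₀ - deriv h z₀ * deriv P z₀) / P z₀ ^ 2 with hpv
    have hpda : HasDerivAt p pv z₀ := hH1da.div hPda hPzne
    have hw1da : HasDerivAt w1 ((pv * p z₀ - (p z₀ - 1) * pv) / p z₀ ^ 2) z₀ :=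
      (hpda.sub_const 1).div hpda hAzne
    rw [hw1da.deriv] at hKeq
    have hz₀pv : z₀ * pv = (K:ℂ) * σ * p z₀ ^ 2 := by
      have h7 : z₀ * ((pv * p z₀ - (p z₀ - 1) * pv) / p z₀ ^ 2) = (K:ℂ) * σ := hKeq
      field_simp at h7
      linear_combination h7
    have hd1 : deriv h z₀ = P z₀ + z₀ * deriv P z₀ := hderP z₀ hz₀B
    have hAval : p z₀ = deriv h z₀ / P z₀ := by rw [hpdef]
    have hpvPz : pv * P z₀ ^ 2 = deriv (deriv h) z₀ * P z₀ - deriv h z₀ * deriv P z₀ := by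
      rw [hpv]
      field_simp
    have hAsq : (p z₀)^2 * P z₀ ^ 2 = deriv h z₀ ^ 2 := by
      rw [hAval]
      field_simp
    have hKs : (K:ℂ) * σ * deriv h z₀ ^ 2
        = z₀ * (deriv (deriv h) z₀ * P z₀ - deriv h z₀ * deriv P z₀) := by
      calc (K:ℂ) * σ * deriv h z₀ ^ 2 = (K:ℂ) * σ * ((p z₀)^2 * P z₀ ^ 2) := by rw [hAsq]
        _ = (z₀ * pv) * P z₀ ^ 2 := by linear_combination (-(P z₀ ^ 2)) * hz₀pv
        _ = z₀ * (deriv (deriv h) z₀ * P z₀ - deriv h z₀ * deriv P z₀) := by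
            linear_combination z₀ * hpvPz
    have hAσH : (1 - σ) * deriv h z₀ = P z₀ := by
      have h9 : deriv h z₀ / P z₀ * P z₀ = deriv h z₀ := div_mul_cancel₀ _ hPzne
      calc (1 - σ) * deriv h z₀ = (1 - σ) * (deriv h z₀ / P z₀ * P z₀) := by rw [h9]
        _ = (p z₀ * (1 - σ)) * P z₀ := by rw [hAval]; ring
        _ = P z₀ := by rw [hAσ, one_mul]
    have hQσ : Q z₀ * (1 - σ) = 1 + (K:ℂ) * σ := by
      have hQH : Q z₀ * deriv h z₀ = deriv h z₀ + z₀ * deriv (deriv h) z₀ := by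
        show ((1:ℂ) + z₀ * deriv (deriv h) z₀ / deriv h z₀) * deriv h z₀ = _
        field_simp
      have hgoal2 : (Q z₀ * (1 - σ)) * deriv h z₀ ^ 2
          = (1 + (K:ℂ) * σ) * deriv h z₀ ^ 2 := by
        calc (Q z₀ * (1 - σ)) * deriv h z₀ ^ 2
            = (Q z₀ * deriv h z₀) * ((1 - σ) * deriv h z₀) := by ring
          _ = (deriv h z₀ + z₀ * deriv (deriv h) z₀) * P z₀ := by rw [hQH, hAσH]
          _ = deriv h z₀ ^ 2 + (K:ℂ) * σ * deriv h z₀ ^ 2 := by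
              linear_combination -hKs - deriv h z₀ * hd1
          _ = (1 + (K:ℂ) * σ) * deriv h z₀ ^ 2 := by ring
      exact mul_right_cancel₀ (pow_ne_zero 2 hH1ne) hgoal2
    have hre := ms_re_half habs1 hσne1 hQσ
    have := hQpos z₀ hz₀B
    rw [hre] at this
    linarith
  -- STEP 5 : Re P > 1/2 on the ball
  have hPgt : ∀ z ∈ ball (0:ℂ) 1, 1/2 < (P z).re := by
    intro z' hz'B
    by_contra hle
    push_neg at hle
    set w2 : ℂ → ℂ := fun z => (P z - 1) / P z with hw2def
    have hw2d : DifferentiableOn ℂ w2 (ball 0 1) :=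
      (hPd.sub (differentiableOn_const 1)).div hPd hPne
    have hw20 : w2 0 = 0 := by rw [hw2def]; simp [hP0]
    have hge1 : 1 ≤ Complex.abs (w2 z') := by
      have habsle : Complex.abs (P z') ≤ Complex.abs (P z' - 1) := by
        have h1 : Complex.abs (P z') ^ 2 ≤ Complex.abs (P z' - 1) ^ 2 := by
          rw [Complex.sq_abs, Complex.sq_abs, Complex.normSq_apply, Complex.normSq_apply,
            Complex.sub_re, Complex.sub_im, Complex.one_re, Complex.one_im]
          nlinarith [hle]
        nlinarith [Complex.abs.nonneg (P z'), Complex.abs.nonneg (P z' - 1)]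
      show (1:ℝ) ≤ Complex.abs ((P z' - 1) / P z')
      rw [map_div₀, le_div_iff₀ (by simpa using hPne z' hz'B), one_mul]
      exact habsle
    obtain ⟨z₀, hz₀B, hz₀ne, habs1, hlemax⟩ := ms_select hw2d hw20 hz'B hge1
    obtain ⟨K, hK1, hKeq⟩ := ms_jack hw2d hw20 hz₀B hz₀ne hlemax habs1
    set σ : ℂ := w2 z₀ with hσdef
    have hPzne : P z₀ ≠ 0 := hPne z₀ hz₀B
    have hσval : σ = (P z₀ - 1) / P z₀ := rfl
    have hAσ : P z₀ * (1 - σ) = 1 := by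
      rw [hσval]
      field_simp
      ring
    have hσne1 : σ ≠ 1 := by
      intro hc
      rw [hc] at hAσ
      simp at hAσ
    have hPda : HasDerivAt P (deriv P z₀) z₀ :=
      (hPd.differentiableAt (isOpen_ball.mem_nhds hz₀B)).hasDerivAt
    have hw2da : HasDerivAt w2
        ((deriv P z₀ * P z₀ - (P z₀ - 1) * deriv P z₀) / P z₀ ^ 2) z₀ :=
      (hPda.sub_const 1).div hPda hPzne
    rw [hw2da.deriv] at hKeq
    have hz₀pv : z₀ * deriv P z₀ = (K:ℂ) * σ * P z₀ ^ 2 := by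
      have h7 : z₀ * ((deriv P z₀ * P z₀ - (P z₀ - 1) * deriv P z₀) / P z₀ ^ 2)
          = (K:ℂ) * σ := hKeq
      field_simp at h7
      linear_combination h7
    -- p z₀ (1 - σ) = 1 + (K-1) σ
    have hpσ : p z₀ * (1 - σ) = 1 + ((K - 1 : ℝ):ℂ) * σ := by
      have hd1 : deriv h z₀ = P z₀ + z₀ * deriv P z₀ := hderP z₀ hz₀B
      have hAval : p z₀ = deriv h z₀ / P z₀ := by rw [hpdef]
      have hgoal2 : (p z₀ * (1 - σ)) * P z₀ = (1 + ((K - 1 : ℝ):ℂ) * σ) * P z₀ := by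
        have h9 : deriv h z₀ / P z₀ * P z₀ = deriv h z₀ := div_mul_cancel₀ _ hPzne
        calc (p z₀ * (1 - σ)) * P z₀
            = (1 - σ) * (deriv h z₀ / P z₀ * P z₀) := by rw [hAval]; ring
          _ = (1 - σ) * deriv h z₀ := by rw [h9]
          _ = (1 + ((K - 1 : ℝ):ℂ) * σ) * P z₀ := by
              push_cast
              linear_combination (1 - σ) * hd1 + (1 - σ) * hz₀pv + ((K:ℂ) * σ * P z₀) * hAσ
      exact mul_right_cancel₀ hPzne hgoal2
    have hre := ms_re_half habs1 hσne1 hpσ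
    have hgt := hpgt z₀ hz₀B
    rw [hre] at hgt
    linarith
  -- conclusion
  intro z hzB hzne
  have := hPgt z hzB
  rwa [hPz z hzne] at this
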